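/- For every real p with 1 < p < ∞ and every dimension N ≥ 1 there exists a constant δ > 0 such that for all vectors X, Y ∈ ℝ^N with X ≠ Y one has ⟨|X|^{p-2}X − |Y|^{p-2}Y, X − Y⟩ ≥ δ (|X − Y| + |Y|)^{p-2} |X − Y|². -/

import Mathlib

open Real

lemma slope_ge (p : ℝ) (hp : 1 < p) : ∃ c : ℝ, 0 < c ∧ ∀ s t : ℝ, 0 < t → t ≤ s →
    c * ((s + t) ^ (p - 2) * (s - t)) ≤ s ^ (p - 1) - t ^ (p - 1) := by
  rcases le_or_gt 2 p with h2 | h2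
  · refine ⟨(2 : ℝ) ^ (2 - p), rpow_pos_of_pos two_pos _, fun s t ht hts => ?_⟩
    have hs : 0 < s := lt_of_lt_of_le ht hts
    have key1 : s ^ (p - 2) * (s - t) ≤ s ^ (p - 1) - t ^ (p - 1) := by
      have h1 : t ^ (p - 1) ≤ s ^ (p - 2) * t := by
        have : t ^ (p - 2) ≤ s ^ (p - 2) := rpow_le_rpow ht.le hts (by linarith)
        calc t ^ (p - 1) = t ^ (p - 2) * t := by
              rw [← rpow_add_one ht.ne' (p - 2)]; ring_nf
          _ ≤ s ^ (p - 2) * t := by nlinarith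
      have h2' : s ^ (p - 1) = s ^ (p - 2) * s := by
        rw [← rpow_add_one hs.ne' (p - 2)]; ring_nf
      nlinarith
    have key2 : (2 : ℝ) ^ (2 - p) * (s + t) ^ (p - 2) ≤ s ^ (p - 2) := by
      have h1 : (s + t) ^ (p - 2) ≤ (2 * s) ^ (p - 2) :=
        rpow_le_rpow (by linarith) (by linarith) (by linarith)
      have h2' : (2 * s) ^ (p - 2) = 2 ^ (p - 2) * s ^ (p - 2) := mul_rpow (by norm_num) hs.le
      have h3 : (2 : ℝ) ^ (2 - p) * 2 ^ (p - 2) = 1 := by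
        rw [← rpow_add two_pos]; norm_num
      calc (2 : ℝ) ^ (2 - p) * (s + t) ^ (p - 2) ≤ 2 ^ (2 - p) * (2 ^ (p - 2) * s ^ (p - 2)) := by
            have := rpow_pos_of_pos (two_pos (α := ℝ)) (2 - p)
            rw [← h2']; nlinarith
        _ = s ^ (p - 2) := by rw [← mul_assoc, h3, one_mul]
    have hst : 0 ≤ (s + t) ^ (p - 2) := rpow_nonneg (by linarith) _
    nlinarith [rpow_pos_of_pos (two_pos (α := ℝ)) (2 - p)]
  · refine ⟨p - 1, by linarith, fun s t ht hts => ?_⟩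
    have hs : 0 < s := lt_of_lt_of_le ht hts
    -- Bernoulli: (t/s)^(p-1) ≤ 1 + (p-1)*(t/s - 1)
    have hb : (t / s) ^ (p - 1) ≤ 1 + (p - 1) * (t / s - 1) := by
      have h := rpow_one_add_le_one_add_mul_self (s := t / s - 1) (p := p - 1)
        (by have := div_nonneg ht.le hs.le; linarith) (by linarith) (by linarith)
      simpa using h
    have hds : (t / s) ^ (p - 1) = t ^ (p - 1) / s ^ (p - 1) := div_rpow ht.le hs.le _
    have hsp : 0 < s ^ (p - 1) := rpow_pos_of_pos hs _
    have key1 : (p - 1) * (s ^ (p - 2) * (s - t)) ≤ s ^ (p - 1) - t ^ (p - 1) := by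
      have h2' : s ^ (p - 2) = s ^ (p - 1) / s := by
        rw [← rpow_sub_one hs.ne']; ring_nf
      rw [hds] at hb
      have hmul : t ^ (p - 1) ≤ (1 + (p - 1) * (t / s - 1)) * s ^ (p - 1) :=
        (div_le_iff₀ hsp).mp hb
      have heq : (p - 1) * (s ^ (p - 1) / s * (s - t)) + (1 + (p - 1) * (t / s - 1)) * s ^ (p - 1)
          = s ^ (p - 1) := by field_simp; ring
      rw [h2']
      linarith
    have key2 : (s + t) ^ (p - 2) ≤ s ^ (p - 2) :=
      rpow_le_rpow_of_nonpos hs (by linarith) (by linarith)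
    have hm : (s + t) ^ (p - 2) * (s - t) ≤ s ^ (p - 2) * (s - t) :=
      mul_le_mul_of_nonneg_right key2 (by linarith)
    nlinarith

lemma core_ineq (p : ℝ) (hp : 1 < p) : ∃ δ : ℝ, 0 < δ ∧ ∀ s t I : ℝ, 0 ≤ s → 0 ≤ t →
    0 < s + t → |I| ≤ s * t →
    δ * ((s + t) ^ (p - 2) * (s ^ 2 + t ^ 2 - 2 * I)) ≤
      s ^ p + t ^ p - (s ^ (p - 2) + t ^ (p - 2)) * I := by
  obtain ⟨c, hc, hslope⟩ := slope_ge p hp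
  refine ⟨min c (min ((2 : ℝ) ^ (-p)) 1), by positivity, ?_⟩
  set δ : ℝ := min c (min ((2 : ℝ) ^ (-p)) 1) with hδdef
  have hδ0 : 0 < δ := by positivity
  have hδc : δ ≤ c := min_le_left _ _
  have hδ2 : δ ≤ (2 : ℝ) ^ (-p) := le_trans (min_le_right _ _) (min_le_left _ _)
  have hδ1 : δ ≤ 1 := le_trans (min_le_right _ _) (min_le_right _ _)
  -- endpoint I = s*t, assuming t ≤ s
  have E1aux : ∀ s t : ℝ, 0 ≤ t → t ≤ s → 0 < s →
      δ * ((s + t) ^ (p - 2) * (s - t) ^ 2) ≤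
        s ^ p + t ^ p - (s ^ (p - 2) + t ^ (p - 2)) * (s * t) := by
    intro s t ht hts hs
    rcases eq_or_lt_of_le ht with h0 | ht
    · -- t = 0
      rw [← h0]
      have h1 : (s + 0) ^ (p - 2) * (s - 0) ^ 2 = s ^ p := by
        rw [add_zero, sub_zero, ← Real.rpow_natCast s 2, ← Real.rpow_add hs]
        norm_num
      have h2 : (0 : ℝ) ^ p = 0 := Real.zero_rpow (by positivity)
      rw [h1, h2]
      have : 0 < s ^ p := Real.rpow_pos_of_pos hs _
      nlinarith
    · have key : s ^ p + t ^ p - (s ^ (p - 2) + t ^ (p - 2)) * (s * t)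
          = (s - t) * (s ^ (p - 1) - t ^ (p - 1)) := by
        have e1 : s ^ p = s ^ (p - 1) * s := by
          rw [← Real.rpow_add_one hs.ne']; ring_nf
        have e2 : t ^ p = t ^ (p - 1) * t := by
          rw [← Real.rpow_add_one ht.ne']; ring_nf
        have e3 : s ^ (p - 1) = s ^ (p - 2) * s := by
          rw [← Real.rpow_add_one hs.ne']; ring_nf
        have e4 : t ^ (p - 1) = t ^ (p - 2) * t := by
          rw [← Real.rpow_add_one ht.ne']; ring_nf
        rw [e1, e2, e3, e4]; ring
      rw [key]
      have hsl := hslope s t ht hts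
      have h1 : c * ((s + t) ^ (p - 2) * (s - t)) * (s - t) ≤ (s ^ (p - 1) - t ^ (p - 1)) * (s - t) :=
        mul_le_mul_of_nonneg_right hsl (by linarith)
      have h2 : 0 ≤ (s + t) ^ (p - 2) * (s - t) ^ 2 := by positivity
      nlinarith
  have E1 : ∀ s t : ℝ, 0 ≤ s → 0 ≤ t → 0 < s + t →
      δ * ((s + t) ^ (p - 2) * (s - t) ^ 2) ≤
        s ^ p + t ^ p - (s ^ (p - 2) + t ^ (p - 2)) * (s * t) := by
    intro s t hs ht hst
    rcases le_total t s with h | h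
    · have hs' : 0 < s := by
        rcases eq_or_lt_of_le hs with h0 | h0
        · exfalso; linarith
        · exact h0
      exact E1aux s t ht h hs'
    · have ht' : 0 < t := by
        rcases eq_or_lt_of_le ht with h0 | h0
        · exfalso; linarith
        · exact h0
      have := E1aux t s hs h ht'
      have e1 : (t - s) ^ 2 = (s - t) ^ 2 := by ring
      have e2 : t * s = s * t := by ring
      rw [add_comm t s, e1, e2] at this
      linarith
  -- endpoint I = -(s*t)
  have E2 : ∀ s t : ℝ, 0 ≤ s → 0 ≤ t → 0 < s + t →
      δ * ((s + t) ^ (p - 2) * (s + t) ^ 2) ≤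
        s ^ p + t ^ p + (s ^ (p - 2) + t ^ (p - 2)) * (s * t) := by
    intro s t hs ht hst
    have h1 : (s + t) ^ (p - 2) * (s + t) ^ 2 = (s + t) ^ p := by
      rw [← Real.rpow_natCast (s + t) 2, ← Real.rpow_add hst]; norm_num
    rw [h1]
    have h2 : (s + t) ^ p ≤ 2 ^ p * (s ^ p + t ^ p) := by
      rcases le_total s t with h | h
      · have : (s + t) ^ p ≤ (2 * t) ^ p := Real.rpow_le_rpow (by linarith) (by linarith) (by linarith)
        have h3 : (2 * t) ^ p = 2 ^ p * t ^ p := Real.mul_rpow (by norm_num) ht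
        have h4 : 0 ≤ s ^ p := Real.rpow_nonneg hs _
        have h5 : (0:ℝ) < 2 ^ p := Real.rpow_pos_of_pos two_pos _
        nlinarith
      · have : (s + t) ^ p ≤ (2 * s) ^ p := Real.rpow_le_rpow (by linarith) (by linarith) (by linarith)
        have h3 : (2 * s) ^ p = 2 ^ p * s ^ p := Real.mul_rpow (by norm_num) hs
        have h4 : 0 ≤ t ^ p := Real.rpow_nonneg ht _
        have h5 : (0:ℝ) < 2 ^ p := Real.rpow_pos_of_pos two_pos _
        nlinarith
    have h6 : δ * 2 ^ p ≤ 1 := by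
      have h7 : (2:ℝ) ^ (-p) * 2 ^ p = 1 := by
        rw [← Real.rpow_add two_pos]; norm_num
      have h5 : (0:ℝ) < 2 ^ p := Real.rpow_pos_of_pos two_pos _
      nlinarith
    have h8 : 0 ≤ (s ^ (p - 2) + t ^ (p - 2)) * (s * t) := by
      have := Real.rpow_nonneg hs (p - 2); have := Real.rpow_nonneg ht (p - 2)
      positivity
    have h9 : 0 ≤ s ^ p + t ^ p := by
      have := Real.rpow_nonneg hs p; have := Real.rpow_nonneg ht p; linarith
    nlinarith [Real.rpow_pos_of_pos two_pos p]
  -- combine by linearity in I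
  intro s t I hs ht hst hI
  have hI1 : -(s * t) ≤ I := neg_le_of_abs_le hI
  have hI2 : I ≤ s * t := le_of_abs_le hI
  have hP : 0 ≤ (s + t) ^ (p - 2) := Real.rpow_nonneg hst.le _
  set a := s ^ (p - 2)
  set b := t ^ (p - 2)
  set P := (s + t) ^ (p - 2)
  rcases le_or_gt 0 (a + b - 2 * δ * P) with hC | hC
  · have h1 := E1 s t hs ht hst
    have h2 : 0 ≤ (s * t - I) * (a + b - 2 * δ * P) :=
      mul_nonneg (by linarith) hC
    nlinarith
  · have h1 := E2 s t hs ht hst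
    have h2 : 0 ≤ (s * t + I) * (2 * δ * P - (a + b)) :=
      mul_nonneg (by linarith) (by linarith)
    nlinarith

lemma comp_rpow (p : ℝ) : ∃ K : ℝ, 0 < K ∧ ∀ u v : ℝ, 0 < u → 0 < v → u ≤ 2 * v → v ≤ 2 * u →
    u ^ (p - 2) ≤ K * v ^ (p - 2) := by
  rcases le_or_gt 2 p with h2 | h2
  · refine ⟨(2 : ℝ) ^ (p - 2), Real.rpow_pos_of_pos two_pos _, fun u v hu hv h1 h2' => ?_⟩
    calc u ^ (p - 2) ≤ (2 * v) ^ (p - 2) := Real.rpow_le_rpow hu.le h1 (by linarith)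
      _ = 2 ^ (p - 2) * v ^ (p - 2) := Real.mul_rpow (by norm_num) hv.le
  · refine ⟨(2 : ℝ) ^ (2 - p), Real.rpow_pos_of_pos two_pos _, fun u v hu hv h1 h2' => ?_⟩
    have hvu : v / 2 ≤ u := by linarith
    have hv2 : 0 < v / 2 := by linarith
    calc u ^ (p - 2) ≤ (v / 2) ^ (p - 2) :=
          Real.rpow_le_rpow_of_nonpos hv2 hvu (by linarith)
      _ = v ^ (p - 2) / 2 ^ (p - 2) := Real.div_rpow hv.le (by norm_num) _
      _ = 2 ^ (2 - p) * v ^ (p - 2) := by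
          rw [div_eq_mul_inv, ← Real.rpow_neg (by norm_num : (0:ℝ) ≤ 2)]
          ring_nf

open scoped RealInnerProductSpace

theorem coercivity_pLaplace (p : ℝ) (hp : 1 < p) (N : ℕ) (hN : 1 ≤ N) :
    ∃ δ : ℝ, 0 < δ ∧ ∀ X Y : EuclideanSpace ℝ (Fin N), X ≠ Y →
      δ * ((‖X - Y‖ + ‖Y‖) ^ (p - 2) * ‖X - Y‖ ^ 2) ≤
        ⟪(‖X‖ ^ (p - 2)) • X - (‖Y‖ ^ (p - 2)) • Y, X - Y⟫ := by
  obtain ⟨δ', hδ'0, hcore⟩ := core_ineq p hp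
  obtain ⟨K, hK0, hcomp⟩ := comp_rpow p
  refine ⟨δ' / K, by positivity, fun X Y hXY => ?_⟩
  set s := ‖X‖ with hs_def
  set t := ‖Y‖ with ht_def
  set d := ‖X - Y‖ with hd_def
  have hs : 0 ≤ s := norm_nonneg _
  have ht : 0 ≤ t := norm_nonneg _
  have hd : 0 < d := by
    rw [hd_def, norm_pos_iff]
    exact sub_ne_zero.mpr hXY
  have hst : 0 < s + t := by
    by_contra h
    push_neg at h
    have hX0 : X = 0 := by
      rw [← norm_eq_zero]; rw [← hs_def]; linarith
    have hY0 : Y = 0 := by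
      rw [← norm_eq_zero]; rw [← ht_def]; linarith
    exact hXY (hX0.trans hY0.symm)
  set I : ℝ := ⟪X, Y⟫ with hI_def
  have hIbound : |I| ≤ s * t := abs_real_inner_le_norm X Y
  have hd2 : (d : ℝ) ^ 2 = s ^ 2 + t ^ 2 - 2 * I := by
    rw [hd_def, hs_def, ht_def, hI_def, norm_sub_sq_real]; ring
  have hpow : ∀ r : ℝ, 0 ≤ r → r ^ (p - 2) * r ^ 2 = r ^ p := by
    intro r hr
    rcases eq_or_lt_of_le hr with h0 | h0
    · rw [← h0]
      rw [Real.zero_rpow (by positivity : p ≠ 0)]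
      norm_num
    · rw [← Real.rpow_natCast r 2, ← Real.rpow_add h0]
      norm_num
  have hinner : ⟪(s ^ (p - 2)) • X - (t ^ (p - 2)) • Y, X - Y⟫
      = s ^ p + t ^ p - (s ^ (p - 2) + t ^ (p - 2)) * I := by
    have hYX : (inner ℝ Y X : ℝ) = I := by rw [hI_def]; exact real_inner_comm X Y
    have hXY' : (inner ℝ X Y : ℝ) = I := hI_def.symm
    rw [inner_sub_left, inner_sub_right, inner_sub_right, real_inner_smul_left,
      real_inner_smul_left, real_inner_smul_left, real_inner_smul_left,
      real_inner_self_eq_norm_sq, real_inner_self_eq_norm_sq, hYX, hXY']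
    simp only [← hs_def, ← ht_def]
    rw [← hpow s hs, ← hpow t ht]
    ring
  rw [hinner]
  have hcmp : (d + t) ^ (p - 2) ≤ K * (s + t) ^ (p - 2) := by
    apply hcomp _ _ (by linarith) hst
    · have h1 : d ≤ s + t := norm_sub_le X Y
      linarith
    · have h2 : s ≤ d + t := by
        calc s = ‖(X - Y) + Y‖ := by rw [hs_def]; congr 1; abel
          _ ≤ d + t := norm_add_le _ _
      linarith
  have hmain := hcore s t I hs ht hst hIbound
  rw [← hd2] at hmain
  have hd2pos : (0:ℝ) ≤ d ^ 2 := by positivity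
  have step : δ' / K * ((d + t) ^ (p - 2) * d ^ 2) ≤ δ' * ((s + t) ^ (p - 2) * d ^ 2) := by
    have h1 : δ' / K * (d + t) ^ (p - 2) ≤ δ' * (s + t) ^ (p - 2) := by
      have := mul_le_mul_of_nonneg_left hcmp (le_of_lt (div_pos hδ'0 hK0))
      calc δ' / K * (d + t) ^ (p - 2) ≤ δ' / K * (K * (s + t) ^ (p - 2)) := this
        _ = δ' * (s + t) ^ (p - 2) := by field_simp
    have hdt : 0 ≤ (d + t) ^ (p - 2) := Real.rpow_nonneg (by linarith) _
    nlinarith [mul_le_mul_of_nonneg_right h1 hd2pos]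
  calc δ' / K * ((d + t) ^ (p - 2) * d ^ 2) ≤ δ' * ((s + t) ^ (p - 2) * d ^ 2) := step
    _ ≤ _ := hmain
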